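/- Let m > 5, L = SL_{2^m}(F_2), R = L × L × L, and let G be a finite group with ω(G) = ω(R). If p_1, p_2, p_3, p_4 are four pairwise distinct primes such that the multiplicative orders e(p_i,2) of 2 modulo p_i are pairwise distinct and each satisfies 2^{m−1} < e(p_i,2) ≤ 2^m, then no element of G has order divisible by p_1 p_2 p_3 p_4. -/
import Mathlib

open Polynomial

private lemma aux_prime_dvd {pp d N : ℕ} (hp : pp.Prime) (hpN : pp ∣ N)
    (hdN : d ∣ N) (h : ¬ d ∣ N / pp) : pp ∣ d := by
  by_contra hc
  apply h
  have hcop : Nat.Coprime d pp := (Nat.coprime_comm.mp ((hp.coprime_iff_not_dvd).mpr hc))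
  have hN : N = pp * (N / pp) := (Nat.mul_div_cancel' hpN).symm
  exact hcop.dvd_of_dvd_mul_left (hN ▸ hdN)

private lemma aux_factor {q r s : Polynomial (ZMod 2)} (hqs : q ∣ s) (hs : Squarefree s)
    (h : ¬ q ∣ r) : ∃ f, Irreducible f ∧ f ∣ q ∧ ¬ f ∣ r := by
  have hq0 : q ≠ 0 := by
    rintro rfl
    exact hs.ne_zero (zero_dvd_iff.mp hqs)
  set d := EuclideanDomain.gcd q r with hd
  obtain ⟨s', hs'⟩ : d ∣ q := EuclideanDomain.gcd_dvd_left q r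
  have hs'0 : s' ≠ 0 := by rintro rfl; simp at hs'; exact hq0 hs'
  have hs'u : ¬ IsUnit s' := by
    intro hu
    apply h
    have hass : Associated d q := ⟨hu.unit, by rw [IsUnit.unit_spec]; exact hs'.symm⟩
    exact (hass.symm.dvd.trans (EuclideanDomain.gcd_dvd_right q r))
  obtain ⟨f, hf, hfs'⟩ := WfDvdMonoid.exists_irreducible_factor hs'u hs'0
  refine ⟨f, hf, hs' ▸ hfs'.mul_left d, ?_⟩
  intro hfr
  have hfq : f ∣ q := hs' ▸ hfs'.mul_left d
  have hfd : f ∣ d := EuclideanDomain.dvd_gcd hfq hfr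
  have : f * f ∣ s := dvd_trans (hs' ▸ mul_dvd_mul hfd hfs') hqs
  exact hf.not_isUnit (hs f this)

private lemma aux_field {f : Polynomial (ZMod 2)} (hf : Irreducible f)
    {N pp : ℕ} (hp : pp.Prime) (hpN : pp ∣ N) (hN : N ≠ 0)
    (h1 : f ∣ X ^ N - 1) (h2 : ¬ f ∣ X ^ (N / pp) - 1) :
    pp ∣ 2 ^ f.natDegree - 1 := by
  haveI := Fact.mk hf
  set K := AdjoinRoot f
  set β : K := AdjoinRoot.root f with hβ
  have hβN : β ^ N = 1 := by
    have h0 : AdjoinRoot.mk f (X ^ N - 1) = 0 := AdjoinRoot.mk_eq_zero.mpr h1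
    have h' : β ^ N - 1 = 0 := by
      rw [map_sub, map_pow, map_one, AdjoinRoot.mk_X] at h0
      exact h0
    linear_combination h'
  have hβM : β ^ (N / pp) ≠ 1 := by
    intro h
    apply h2
    rw [← AdjoinRoot.mk_eq_zero, map_sub, map_pow, map_one, AdjoinRoot.mk_X, h, sub_self]
  have hdvd1 : orderOf β ∣ N := orderOf_dvd_of_pow_eq_one hβN
  have hndvd : ¬ orderOf β ∣ N / pp := fun h =>
    hβM (orderOf_dvd_iff_pow_eq_one.mp h)
  have hpd : pp ∣ orderOf β := aux_prime_dvd hp hpN hdvd1 hndvd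
  have hf0 : f ≠ 0 := hf.ne_zero
  have pb := AdjoinRoot.powerBasisAux hf0
  haveI : Fintype K := Module.fintypeOfFintype pb
  have hcard : Fintype.card K = 2 ^ f.natDegree := by
    rw [Module.card_fintype pb, ZMod.card, Fintype.card_fin]
  have hβ0 : β ≠ 0 := by
    intro h
    rw [h, zero_pow hN] at hβN
    exact zero_ne_one hβN
  have hone : β ^ (Fintype.card K - 1) = 1 := FiniteField.pow_card_sub_one_eq_one β hβ0
  have horddvd : orderOf β ∣ 2 ^ f.natDegree - 1 := by
    rw [← hcard]
    exact orderOf_dvd_of_pow_eq_one hone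
  exact hpd.trans horddvd

private lemma aux_arith {e1 e2 d B : ℕ} (h1 : e1 ∣ d) (h2 : e2 ∣ d) (hne : e1 ≠ e2)
    (hl1 : B < e1) (hl2 : B < e2) (hd : 0 < d) (hdn : d ≤ 2 * B) : False := by
  obtain ⟨k1, hk1⟩ := h1
  obtain ⟨k2, hk2⟩ := h2
  have he1 : d = e1 := by
    rcases k1 with _ | _ | k
    · simp at hk1; omega
    · simpa using hk1
    · exfalso
      have hge : 2 * e1 ≤ d := by nlinarith
      omega
  have he2 : d = e2 := by
    rcases k2 with _ | _ | k
    · simp at hk2; omega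
    · simpa using hk2
    · exfalso
      have hge : 2 * e2 ≤ d := by nlinarith
      omega
  omega

theorem no_element_of_order_four_primes (m : ℕ) (hm : 5 < m)
    (G : Type*) [Group G] [Fintype G]
    (hspec : {a : ℕ | ∃ g : G, orderOf g = a} =
      {a : ℕ | ∃ x : Matrix.SpecialLinearGroup (Fin (2 ^ m)) (ZMod 2) ×
        Matrix.SpecialLinearGroup (Fin (2 ^ m)) (ZMod 2) ×
        Matrix.SpecialLinearGroup (Fin (2 ^ m)) (ZMod 2), orderOf x = a})
    (p : Fin 4 → ℕ) (hprime : ∀ i, (p i).Prime) (hinj : Function.Injective p)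
    (horder : ∀ i, 2 ^ (m - 1) < orderOf (2 : ZMod (p i)) ∧ orderOf (2 : ZMod (p i)) ≤ 2 ^ m)
    (hdist : ∀ i j, i ≠ j → orderOf (2 : ZMod (p i)) ≠ orderOf (2 : ZMod (p j))) :
    ∀ g : G, ¬ ((p 0 * p 1 * p 2 * p 3) ∣ orderOf g) := by
  intro g hdvd
  have hgmem : orderOf g ∈ {a : ℕ | ∃ g : G, orderOf g = a} := ⟨g, rfl⟩
  rw [hspec] at hgmem
  obtain ⟨x, hx⟩ := hgmem
  let Z : Fin 3 → Matrix.SpecialLinearGroup (Fin (2 ^ m)) (ZMod 2) := ![x.1, x.2.1, x.2.2]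
  have hlcm : orderOf g = Nat.lcm (orderOf (Z 0)) (Nat.lcm (orderOf (Z 1)) (orderOf (Z 2))) := by
    rw [← hx, Prod.orderOf x, Prod.orderOf x.2]
    rfl
  have hpdvd : ∀ i : Fin 4, p i ∣ orderOf g := by
    intro i
    refine dvd_trans ?_ hdvd
    fin_cases i
    · exact ((dvd_mul_right (p 0) (p 1)).mul_right (p 2)).mul_right (p 3)
    · exact ((dvd_mul_left (p 1) (p 0)).mul_right (p 2)).mul_right (p 3)
    · exact (dvd_mul_left (p 2) (p 0 * p 1)).mul_right (p 3)
    · exact dvd_mul_left (p 3) (p 0 * p 1 * p 2)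
  have hchoice : ∀ i : Fin 4, ∃ k : Fin 3, p i ∣ orderOf (Z k) := by
    intro i
    have h := hpdvd i
    rw [hlcm] at h
    rcases ((hprime i).dvd_mul.mp (h.trans (Nat.lcm_dvd_mul _ _))) with h1 | h1
    · exact ⟨0, h1⟩
    rcases ((hprime i).dvd_mul.mp (h1.trans (Nat.lcm_dvd_mul _ _))) with h2 | h2
    · exact ⟨1, h2⟩
    · exact ⟨2, h2⟩
  choose c hc using hchoice
  obtain ⟨i, j, hij, hcij⟩ := Fintype.exists_ne_map_eq_of_card_lt c (by simp)
  have hprimei := hprime i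
  have hprimej := hprime j
  have hpi : p i ∣ orderOf (Z (c i)) := hc i
  have hpj : p j ∣ orderOf (Z (c i)) := by have := hc j; rwa [← hcij] at this
  have hpij : p i ≠ p j := fun h => hij (hinj h)
  have hcop : Nat.Coprime (p i) (p j) := (Nat.coprime_primes hprimei hprimej).mpr hpij
  set N := p i * p j with hNdef
  have hN0 : N ≠ 0 := Nat.mul_ne_zero hprimei.ne_zero hprimej.ne_zero
  have hNdvd : N ∣ orderOf (Z (c i)) := hcop.mul_dvd_of_dvd_of_dvd hpi hpj
  have hall : ∀ k : Fin 3, orderOf (Z k) ∣ orderOf g := by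
    intro k
    rw [hlcm]
    fin_cases k
    · exact Nat.dvd_lcm_left _ _
    · exact (Nat.dvd_lcm_left _ _).trans (Nat.dvd_lcm_right _ _)
    · exact (Nat.dvd_lcm_right _ _).trans (Nat.dvd_lcm_right _ _)
  have hgpos : 0 < orderOf g := orderOf_pos g
  have hw0 : orderOf (Z (c i)) ≠ 0 := by
    intro h
    have h2 := hall (c i)
    rw [h] at h2
    exact hgpos.ne' (Nat.eq_zero_of_zero_dvd h2)
  set y := (Z (c i)) ^ (orderOf (Z (c i)) / N) with hy
  have hordy : orderOf y = N := orderOf_pow_orderOf_div hw0 hNdvd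
  haveI : Nonempty (Fin (2 ^ m)) := ⟨⟨0, by positivity⟩⟩
  let φ : Matrix.SpecialLinearGroup (Fin (2 ^ m)) (ZMod 2) →*
      Matrix (Fin (2 ^ m)) (Fin (2 ^ m)) (ZMod 2) :=
    { toFun := fun u => ↑u
      map_one' := Matrix.SpecialLinearGroup.coe_one
      map_mul' := fun a b => Matrix.SpecialLinearGroup.coe_mul a b }
  have hφ : Function.Injective φ := fun a b h => Subtype.ext h
  set A := φ y with hA
  have hordA : orderOf A = N := by rw [hA, orderOf_injective φ hφ, hordy]
  have hint : IsIntegral (ZMod 2) A := Matrix.isIntegral A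
  set q := minpoly (ZMod 2) A with hq
  have hq0 : q ≠ 0 := minpoly.ne_zero hint
  have hAN : A ^ N = 1 := by rw [← hordA]; exact pow_orderOf_eq_one A
  have hq1 : q ∣ X ^ N - 1 := minpoly.dvd _ _ (by
    rw [map_sub, map_pow, aeval_X, map_one, hAN, sub_self])
  have hqdeg : q.natDegree ≤ 2 ^ m := by
    have h := Matrix.minpoly_dvd_charpoly A
    have hch0 : (Matrix.charpoly A) ≠ 0 := (Matrix.charpoly_monic A).ne_zero
    have h2 := Polynomial.natDegree_le_of_dvd h hch0
    rwa [Matrix.charpoly_natDegree_eq_dim, Fintype.card_fin] at h2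
  have hptwo : ∀ k : Fin 4, p k ≠ 2 := by
    intro k hk
    have h1 := (horder k).1
    rw [hk] at h1
    have h2 : (2 : ZMod 2) = 0 := by decide
    rw [h2] at h1
    have h3 : orderOf (0 : ZMod 2) = 0 :=
      orderOf_eq_zero_iff'.mpr (fun n hn => by rw [zero_pow hn.ne']; exact zero_ne_one)
    rw [h3] at h1
    exact Nat.not_lt_zero _ h1
  have hNodd : ¬ 2 ∣ N := by
    intro h
    rcases (Nat.prime_two.dvd_mul.mp h) with h1 | h1
    · exact hptwo i ((Nat.prime_dvd_prime_iff_eq Nat.prime_two hprimei).mp h1).symm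
    · exact hptwo j ((Nat.prime_dvd_prime_iff_eq Nat.prime_two hprimej).mp h1).symm
  have hsf : Squarefree ((X : Polynomial (ZMod 2)) ^ N - 1) := by
    have hcast : ((N : ZMod 2)) ≠ 0 := by
      rw [Ne, ZMod.natCast_eq_zero_iff]
      exact hNodd
    have hsep := Polynomial.separable_X_pow_sub_C (1 : ZMod 2) hcast one_ne_zero
    rw [map_one] at hsep
    exact hsep.squarefree
  have hnd : ∀ P : ℕ, P.Prime → P ∣ N → ¬ q ∣ X ^ (N / P) - 1 := by
    intro P hP hPN hdd
    have hA1 : A ^ (N / P) = 1 := by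
      obtain ⟨cc, hcc⟩ := hdd
      have h0 : (aeval A) ((X : Polynomial (ZMod 2)) ^ (N / P) - 1) = 0 := by
        rw [hcc, map_mul, minpoly.aeval, zero_mul]
      rw [map_sub, map_pow, aeval_X, map_one, sub_eq_zero] at h0
      exact h0
    have hdvd2 := orderOf_dvd_of_pow_eq_one hA1
    rw [hordA] at hdvd2
    have hP0 : 0 < N / P := Nat.div_pos (Nat.le_of_dvd (Nat.pos_of_ne_zero hN0) hPN) hP.pos
    have hle := Nat.le_of_dvd hP0 hdvd2
    have hlt : N / P < N := Nat.div_lt_self (Nat.pos_of_ne_zero hN0) hP.one_lt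
    omega
  obtain ⟨fi, hfi, hfiq, hfir⟩ := aux_factor hq1 hsf (hnd (p i) hprimei (dvd_mul_right _ _))
  obtain ⟨fj, hfj, hfjq, hfjr⟩ := aux_factor hq1 hsf (hnd (p j) hprimej (dvd_mul_left _ _))
  have hdvd2i : p i ∣ 2 ^ fi.natDegree - 1 :=
    aux_field hfi hprimei (dvd_mul_right _ _) hN0 (hfiq.trans hq1) hfir
  have hdvd2j : p j ∣ 2 ^ fj.natDegree - 1 :=
    aux_field hfj hprimej (dvd_mul_left _ _) hN0 (hfjq.trans hq1) hfjr
  have hcast2 : ∀ (P d : ℕ), P ∣ 2 ^ d - 1 → orderOf (2 : ZMod P) ∣ d := by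
    intro P d h
    have h1 : ((2 ^ d - 1 : ℕ) : ZMod P) = 0 := (ZMod.natCast_eq_zero_iff _ _).mpr h
    have hle : (1 : ℕ) ≤ 2 ^ d := Nat.one_le_two_pow
    rw [Nat.cast_sub hle, Nat.cast_pow, Nat.cast_ofNat, Nat.cast_one, sub_eq_zero] at h1
    exact orderOf_dvd_of_pow_eq_one h1
  have hdi0 : 0 < fi.natDegree := hfi.natDegree_pos
  have hdj0 : 0 < fj.natDegree := hfj.natDegree_pos
  have h2m : 2 ^ m = 2 * 2 ^ (m - 1) := by
    conv_lhs => rw [show m = (m - 1) + 1 by omega]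
    ring
  by_cases hass : Associated fi fj
  · have hfir' : ¬ fi ∣ X ^ (N / p j) - 1 := fun h => hfjr (hass.symm.dvd.trans h)
    have hdvd2j' : p j ∣ 2 ^ fi.natDegree - 1 :=
      aux_field hfi hprimej (dvd_mul_left _ _) hN0 (hfiq.trans hq1) hfir'
    have hdegi : fi.natDegree ≤ 2 ^ m :=
      le_trans (Polynomial.natDegree_le_of_dvd hfiq hq0) hqdeg
    exact aux_arith (hcast2 _ _ hdvd2i) (hcast2 _ _ hdvd2j') (hdist i j hij)
      (horder i).1 (horder j).1 hdi0 (by omega)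
  · have hndvd' : ¬ fi ∣ fj := fun h => hass (hfi.associated_of_dvd hfj h)
    have hcp : IsCoprime fi fj := (hfi.coprime_iff_not_dvd).mpr hndvd'
    have hmul : fi * fj ∣ q := hcp.mul_dvd hfiq hfjq
    have hsum : fi.natDegree + fj.natDegree ≤ 2 ^ m := by
      have h1 := Polynomial.natDegree_le_of_dvd hmul hq0
      rw [Polynomial.natDegree_mul hfi.ne_zero hfj.ne_zero] at h1
      exact h1.trans hqdeg
    have hei := Nat.le_of_dvd hdi0 (hcast2 _ _ hdvd2i)
    have hej := Nat.le_of_dvd hdj0 (hcast2 _ _ hdvd2j)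
    have hb1 := (horder i).1
    have hb2 := (horder j).1
    omega
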